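/- Let L be a field equipped with a non-archimedean additive valuation v : L → ℝ ∪ {∞}, with valuation ring A = {x ∈ L : v(x) ≥ 0}, maximal ideal M = {x ∈ L : v(x) > 0}, and residue field K = A/M. Let t ≥ 1 and let b, d be natural numbers. Suppose that every nonzero polynomial in K[x] with at most t+1 nonzero terms has at most b distinct roots in K \ {0}, and that every nonzero polynomial in L[x] with at most t+1 nonzero terms has at most d roots in 1+M counted with multiplicities. Then every nonzero polynomial in L[x] with at most t+1 nonzero terms has at most t·b·d roots in L \ {0} counted with multiplicities. (The same bound holds with distinct roots throughout in place of roots with multiplicities on both the d-hypothesis and the conclusion.) -/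

import Mathlib

set_option linter.unusedSectionVars false
open scoped Classical
open Polynomial

/-- The valuation ring `A = {x : 0 ≤ v x}` of a non-archimedean additive
valuation `v : L → ℝ ∪ {∞}`. -/
def valRing (L : Type*) [Field L] (v : L → WithTop ℝ)
    (hv0 : ∀ x, v x = ⊤ ↔ x = 0)
    (hvmul : ∀ x y, v (x * y) = v x + v y)
    (hvadd : ∀ x y, min (v x) (v y) ≤ v (x + y)) : Subring L where
  carrier := {x | 0 ≤ v x}
  zero_mem' := by
    simp only [Set.mem_setOf_eq, (hv0 0).mpr rfl]
    exact le_top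
  one_mem' := by
    simp only [Set.mem_setOf_eq]
    have h := hvmul 1 1
    rw [one_mul] at h
    by_cases hT : v 1 = ⊤
    · rw [hT]; exact le_top
    · obtain ⟨a, ha⟩ := WithTop.ne_top_iff_exists.mp hT
      rw [← ha] at h ⊢
      rw [← WithTop.coe_add, WithTop.coe_eq_coe] at h
      have : a = 0 := by linarith
      simp [this]
  add_mem' := fun hx hy => le_trans (le_min hx hy) (hvadd _ _)
  mul_mem' := fun {x y} hx hy => by
    have h := hvmul x y
    simp only [Set.mem_setOf_eq] at *
    rw [h]
    exact add_nonneg hx hy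
  neg_mem' := fun {x} hx => by
    simp only [Set.mem_setOf_eq] at *
    have hone : (0 : WithTop ℝ) ≤ v 1 := by
      have h := hvmul 1 1
      rw [one_mul] at h
      by_cases hT : v 1 = ⊤
      · rw [hT]; exact le_top
      · obtain ⟨a, ha⟩ := WithTop.ne_top_iff_exists.mp hT
        rw [← ha] at h ⊢
        rw [← WithTop.coe_add, WithTop.coe_eq_coe] at h
        have : a = 0 := by linarith
        simp [this]
    have h := hvmul (-1) x
    rw [neg_one_mul] at h
    rw [h]
    have hm1 : (0 : WithTop ℝ) ≤ v (-1) := by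
      have h2 := hvmul (-1) (-1)
      rw [neg_one_mul, neg_neg] at h2
      by_cases hT : v (-1) = ⊤
      · rw [hT]; exact le_top
      · obtain ⟨a, ha⟩ := WithTop.ne_top_iff_exists.mp hT
        rw [← ha]
        have h3 := hvmul 1 1
        rw [one_mul] at h3
        have h1T : v 1 ≠ ⊤ := by
          intro habs
          exact one_ne_zero ((hv0 1).mp habs)
        obtain ⟨b, hb⟩ := WithTop.ne_top_iff_exists.mp h1T
        rw [← hb, ← ha, ← WithTop.coe_add, WithTop.coe_eq_coe] at h2
        rw [← hb, ← WithTop.coe_add, WithTop.coe_eq_coe] at h3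
        have hb0 : b = 0 := by linarith
        have ha0 : a = 0 := by rw [hb0] at h2; linarith
        simp [ha0]
    exact add_nonneg hm1 hx

/-- The maximal ideal `M = {x : 0 < v x}` of the valuation ring. -/
def valIdeal (L : Type*) [Field L] (v : L → WithTop ℝ)
    (hv0 : ∀ x, v x = ⊤ ↔ x = 0)
    (hvmul : ∀ x y, v (x * y) = v x + v y)
    (hvadd : ∀ x y, min (v x) (v y) ≤ v (x + y)) :
    Ideal (valRing L v hv0 hvmul hvadd) where
  carrier := {x | 0 < v (x : L)}
  zero_mem' := by
    simp only [Set.mem_setOf_eq, ZeroMemClass.coe_zero, (hv0 0).mpr rfl]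
    exact WithTop.coe_lt_top 0
  add_mem' := fun {x y} hx hy =>
    lt_of_lt_of_le (lt_min hx hy) (hvadd _ _)
  smul_mem' := fun c x hx => by
    simp only [Set.mem_setOf_eq, smul_eq_mul, Subring.coe_mul] at *
    rw [hvmul]
    calc (0 : WithTop ℝ) < v (x : L) := hx
      _ = 0 + v (x : L) := (zero_add _).symm
      _ ≤ v (c : L) + v (x : L) := add_le_add c.2 le_rfl


section Helpers
variable {L : Type*} [Field L] (v : L → WithTop ℝ)
  (hv0 : ∀ x, v x = ⊤ ↔ x = 0)
  (hvmul : ∀ x y, v (x * y) = v x + v y)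
  (hvadd : ∀ x y, min (v x) (v y) ≤ v (x + y))

include hv0 hvmul hvadd

lemma v_zero' : v 0 = ⊤ := (hv0 0).mpr rfl

lemma v_ne_top {x : L} (hx : x ≠ 0) : v x ≠ ⊤ := fun h => hx ((hv0 x).mp h)

lemma v_one' : v 1 = 0 := by
  have h := hvmul 1 1; rw [one_mul] at h
  obtain ⟨a, ha⟩ := WithTop.ne_top_iff_exists.mp (v_ne_top v hv0 hvmul hvadd (one_ne_zero (α := L)))
  rw [← ha] at h ⊢
  rw [← WithTop.coe_add, WithTop.coe_eq_coe] at h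
  have : a = 0 := by linarith
  simp [this]

lemma v_neg' (x : L) : v (-x) = v x := by
  have hm1 : v (-1 : L) = 0 := by
    have h := hvmul (-1 : L) (-1); rw [neg_one_mul, neg_neg, v_one' v hv0 hvmul hvadd] at h
    obtain ⟨a, ha⟩ := WithTop.ne_top_iff_exists.mp (v_ne_top v hv0 hvmul hvadd (neg_ne_zero.mpr (one_ne_zero (α := L))))
    rw [← ha] at h ⊢
    have h' : (0:ℝ) = a + a := by exact_mod_cast h
    have ha0 : a = 0 := by linarith
    rw [ha0]; simp
  have := hvmul (-1 : L) x
  rw [neg_one_mul, hm1, zero_add] at this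
  exact this

noncomputable def valR (x : L) : ℝ := (v x).untopD 0

lemma v_eq_valR {x : L} (hx : x ≠ 0) : v x = (valR v x : ℝ) := by
  obtain ⟨a, ha⟩ := WithTop.ne_top_iff_exists.mp (v_ne_top v hv0 hvmul hvadd hx)
  rw [← ha, valR, ← ha, WithTop.untopD_coe]

lemma valR_mul {x y : L} (hx : x ≠ 0) (hy : y ≠ 0) : valR v (x * y) = valR v x + valR v y := by
  have h := hvmul x y
  rw [v_eq_valR v hv0 hvmul hvadd hx, v_eq_valR v hv0 hvmul hvadd hy, v_eq_valR v hv0 hvmul hvadd (mul_ne_zero hx hy), ← WithTop.coe_add, WithTop.coe_eq_coe] at h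
  exact h

lemma valR_one : valR v (1 : L) = 0 := by
  have := v_one' v hv0 hvmul hvadd
  rw [valR, this]; rfl

lemma valR_inv {x : L} (hx : x ≠ 0) : valR v x⁻¹ = - valR v x := by
  have h := valR_mul v hv0 hvmul hvadd (inv_ne_zero hx) hx
  rw [inv_mul_cancel₀ hx, valR_one v hv0 hvmul hvadd] at h
  linarith

lemma valR_pow {x : L} (hx : x ≠ 0) (n : ℕ) : valR v (x ^ n) = n * valR v x := by
  induction n with
  | zero => simpa using valR_one v hv0 hvmul hvadd
  | succ n ih =>
    rw [pow_succ, valR_mul v hv0 hvmul hvadd (pow_ne_zero n hx) hx, ih]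
    push_cast; ring

lemma v_add_eq_left {x y : L} (h : v x < v y) : v (x + y) = v x := by
  refine le_antisymm ?_ (le_trans (le_min le_rfl h.le) (hvadd x y))
  by_contra hlt
  push_neg at hlt
  have h2 := hvadd (x + y) (-y)
  rw [add_neg_cancel_right, v_neg' v hv0 hvmul hvadd] at h2
  exact absurd h2 (not_le.mpr (lt_min hlt h))

lemma lt_v_sum {ι : Type*} {s : Finset ι} (g : ι → L) {c : WithTop ℝ} (hc : c < ⊤)
    (h : ∀ i ∈ s, c < v (g i)) : c < v (∑ i ∈ s, g i) := by
  induction s using Finset.cons_induction with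
  | empty => simpa [v_zero' v hv0 hvmul hvadd] using hc
  | cons a s ha ih =>
    rw [Finset.sum_cons]
    exact lt_of_lt_of_le (lt_min (h a (Finset.mem_cons_self a s))
      (ih fun i hi => h i (Finset.mem_cons_of_mem hi))) (hvadd _ _)

lemma v_sum_eq {ι : Type*} {s : Finset ι} (g : ι → L) {i₀ : ι} (hi₀ : i₀ ∈ s)
    (hne : v (g i₀) ≠ ⊤) (hstrict : ∀ j ∈ s, j ≠ i₀ → v (g i₀) < v (g j)) :
    v (∑ i ∈ s, g i) = v (g i₀) := by
  rw [← Finset.add_sum_erase s g hi₀]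
  exact v_add_eq_left v hv0 hvmul hvadd
    (lt_v_sum v hv0 hvmul hvadd g (lt_top_iff_ne_top.mpr hne)
      (fun j hj => hstrict j (Finset.mem_of_mem_erase hj) (Finset.ne_of_mem_erase hj)))


lemma newton_bound (f : Polynomial L) (hf : f ≠ 0) :
    ((f.roots.toFinset.filter (fun r => r ≠ 0)).image (valR v)).card + 1 ≤ f.support.card := by
  classical
  set s := f.support with hs_def
  have hs : s.Nonempty := Polynomial.support_nonempty.mpr hf
  set w : ℝ → ℕ → ℝ := fun γ i => valR v (f.coeff i) + i * γ with hw_def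
  set S : ℝ → Finset ℕ := fun γ => s.filter (fun i => ∀ j ∈ s, w γ i ≤ w γ j) with hS_def
  set Γ := (f.roots.toFinset.filter (fun r => r ≠ 0)).image (valR v) with hΓ_def
  have hSsub : ∀ γ, S γ ⊆ s := fun γ => Finset.filter_subset _ _
  -- every γ ∈ Γ has at least two minimizers
  have key0 : ∀ γ ∈ Γ, ∃ i ∈ S γ, ∃ j ∈ S γ, i ≠ j := by
    intro γ hγ
    obtain ⟨r, hr, hrγ⟩ := Finset.mem_image.mp hγ
    rw [Finset.mem_filter, Multiset.mem_toFinset] at hr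
    obtain ⟨hroot, hr0⟩ := hr
    have heval : f.eval r = 0 := (Polynomial.mem_roots hf).mp hroot
    obtain ⟨i₀, hi₀s, hi₀min⟩ := Finset.exists_min_image s (w γ) hs
    have hi₀S : i₀ ∈ S γ := Finset.mem_filter.mpr ⟨hi₀s, hi₀min⟩
    by_contra hcon
    push_neg at hcon
    have huniq : ∀ j ∈ S γ, j = i₀ := by
      intro j hj
      by_contra hne
      exact hne (hcon i₀ hi₀S j hj |>.symm) -- careful
    have hstrict : ∀ j ∈ s, j ≠ i₀ → w γ i₀ < w γ j := by
      intro j hjs hne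
      rcases lt_or_eq_of_le (hi₀min j hjs) with h | h
      · exact h
      · exfalso
        apply hne
        apply huniq
        refine Finset.mem_filter.mpr ⟨hjs, fun k hk => ?_⟩
        rw [← h]; exact hi₀min k hk
    -- valuation of terms
    have hterm : ∀ i ∈ s, v (f.coeff i * r ^ i) = ((w γ i : ℝ) : WithTop ℝ) := by
      intro i his
      have hci : f.coeff i ≠ 0 := Polynomial.mem_support_iff.mp his
      have hri : r ^ i ≠ 0 := pow_ne_zero _ hr0
      rw [v_eq_valR v hv0 hvmul hvadd (mul_ne_zero hci hri), hw_def]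
      congr 1
      rw [valR_mul v hv0 hvmul hvadd hci hri, valR_pow v hv0 hvmul hvadd hr0, hrγ]
    have hsum : v (∑ i ∈ s, f.coeff i * r ^ i) = ((w γ i₀ : ℝ) : WithTop ℝ) := by
      rw [v_sum_eq v hv0 hvmul hvadd (fun i => f.coeff i * r ^ i) hi₀s]
      · exact hterm i₀ hi₀s
      · rw [hterm i₀ hi₀s]; exact WithTop.coe_ne_top
      · intro j hjs hne
        rw [hterm i₀ hi₀s, hterm j hjs, WithTop.coe_lt_coe]
        exact hstrict j hjs hne
    have heq : (∑ i ∈ s, f.coeff i * r ^ i) = f.eval r := by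
      rw [Polynomial.eval_eq_sum, Polynomial.sum_def]
    rw [heq, heval, v_zero' v hv0 hvmul hvadd] at hsum
    exact WithTop.coe_ne_top hsum.symm
  have hSne : ∀ γ ∈ Γ, (S γ).Nonempty := by
    intro γ hγ; obtain ⟨i, hi, _⟩ := key0 γ hγ; exact ⟨i, hi⟩
  set Mx : ℝ → ℕ := fun γ => if h : (S γ).Nonempty then (S γ).max' h else 0 with hMx_def
  set mn : ℝ → ℕ := fun γ => if h : (S γ).Nonempty then (S γ).min' h else 0 with hmn_def
  have hMxS : ∀ γ ∈ Γ, Mx γ ∈ S γ := by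
    intro γ hγ; rw [hMx_def]; simp only [dif_pos (hSne γ hγ)]; exact (S γ).max'_mem _
  have hmnS : ∀ γ ∈ Γ, mn γ ∈ S γ := by
    intro γ hγ; rw [hmn_def]; simp only [dif_pos (hSne γ hγ)]; exact (S γ).min'_mem _
  have hlt : ∀ γ ∈ Γ, mn γ < Mx γ := by
    intro γ hγ
    obtain ⟨i, hi, j, hj, hij⟩ := key0 γ hγ
    have := Finset.min'_lt_max' (S γ) hi hj hij
    rw [hmn_def, hMx_def]; simp only [dif_pos (hSne γ hγ)]; exact this
  -- strict antitonicity
  have key2 : ∀ γ₁ ∈ Γ, ∀ γ₂ ∈ Γ, γ₁ < γ₂ → Mx γ₂ < Mx γ₁ := by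
    intro γ₁ hγ₁ γ₂ hγ₂ hγ
    have hi : mn γ₁ ∈ S γ₁ := hmnS γ₁ hγ₁
    have hj : Mx γ₂ ∈ S γ₂ := hMxS γ₂ hγ₂
    have h1 : w γ₂ (Mx γ₂) ≤ w γ₂ (mn γ₁) :=
      (Finset.mem_filter.mp hj).2 _ (hSsub γ₁ hi)
    have h2 : w γ₁ (mn γ₁) ≤ w γ₁ (Mx γ₂) :=
      (Finset.mem_filter.mp hi).2 _ (hSsub γ₂ hj)
    rw [hw_def] at h1 h2
    simp only at h1 h2
    have hji : (Mx γ₂ : ℝ) ≤ (mn γ₁ : ℝ) := by nlinarith [sub_pos.mpr hγ]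
    have : Mx γ₂ ≤ mn γ₁ := Nat.cast_le.mp hji
    exact lt_of_le_of_lt this (hlt γ₁ hγ₁)
  -- injection into s.erase (s.min' hs)
  have hmaps : ∀ γ ∈ Γ, Mx γ ∈ s.erase (s.min' hs) := by
    intro γ hγ
    refine Finset.mem_erase.mpr ⟨?_, hSsub γ (hMxS γ hγ)⟩
    have h1 : s.min' hs ≤ mn γ := Finset.min'_le s _ (hSsub γ (hmnS γ hγ))
    have := lt_of_le_of_lt h1 (hlt γ hγ)
    omega
  have hinj : Set.InjOn Mx Γ := by
    intro a ha b hb hab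
    rcases lt_trichotomy a b with h | h | h
    · exact absurd hab (by have := key2 a ha b hb h; omega)
    · exact h
    · exact absurd hab (by have := key2 b hb a ha h; omega)
  have hcard : Γ.card ≤ (s.erase (s.min' hs)).card :=
    Finset.card_le_card_of_injOn Mx hmaps hinj
  rw [Finset.card_erase_of_mem (s.min'_mem hs)] at hcard
  have : 1 ≤ s.card := Finset.card_pos.mpr hs
  omega

end Helpers

section CompLemmas
variable {L : Type*} [Field L]

lemma comp_linear_coeff (f : Polynomial L) (c : L) (n : ℕ) :
    (f.comp (C c * X)).coeff n = f.coeff n * c ^ n := by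
  classical
  rw [Polynomial.comp_eq_sum_left, Polynomial.sum_def, Polynomial.finset_sum_coeff]
  have h1 : ∀ i ∈ f.support, (C (f.coeff i) * (C c * X) ^ i).coeff n
      = if n = i then f.coeff i * c ^ i else 0 := by
    intro i _
    rw [mul_pow, ← C_pow, ← mul_assoc, ← C_mul, coeff_C_mul, coeff_X_pow]
    simp [mul_ite]
  rw [Finset.sum_congr rfl h1, Finset.sum_ite_eq f.support n (fun i => f.coeff i * c ^ i)]
  by_cases h : n ∈ f.support
  · simp [h]
  · simp [h, Polynomial.notMem_support_iff.mp h]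

lemma comp_linear_support (f : Polynomial L) {c : L} (hc : c ≠ 0) :
    (f.comp (C c * X)).support = f.support := by
  ext i
  simp only [Polynomial.mem_support_iff, comp_linear_coeff]
  constructor
  · intro h h2; exact h (by rw [h2, zero_mul])
  · intro h; exact mul_ne_zero h (pow_ne_zero _ hc)

lemma comp_linear_ne_zero {f : Polynomial L} (hf : f ≠ 0) {c : L} (hc : c ≠ 0) :
    f.comp (C c * X) ≠ 0 := by
  intro h
  apply hf
  rw [← Polynomial.support_eq_empty, ← comp_linear_support f hc, h, Polynomial.support_zero]

lemma rootMultiplicity_comp_linear {f : Polynomial L} (hf : f ≠ 0) {c : L} (hc : c ≠ 0)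
    (a : L) : (f.comp (C c * X)).rootMultiplicity a = f.rootMultiplicity (c * a) := by
  have hg : f.comp (C c * X) ≠ 0 := comp_linear_ne_zero hf hc
  have hassoc : (f.comp (C c * X)).comp (C c⁻¹ * X) = f := by
    rw [Polynomial.comp_assoc]
    have h2 : (C c * X).comp (C c⁻¹ * X) = X := by
      rw [Polynomial.mul_comp, Polynomial.C_comp, Polynomial.X_comp, ← mul_assoc, ← C_mul,
        mul_inv_cancel₀ hc, C_1, one_mul]
    rw [h2, Polynomial.comp_X]
  apply le_antisymm
  · generalize hn : (f.comp (C c * X)).rootMultiplicity a = n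
    rw [Polynomial.le_rootMultiplicity_iff hf]
    obtain ⟨e, he⟩ := Polynomial.pow_rootMultiplicity_dvd (f.comp (C c * X)) a
    rw [hn] at he
    have h3 : f = ((X - C a).comp (C c⁻¹ * X)) ^ n * e.comp (C c⁻¹ * X) := by
      rw [← Polynomial.pow_comp, ← Polynomial.mul_comp, ← he, hassoc]
    have hXa : (X - C a).comp (C c⁻¹ * X) = C c⁻¹ * (X - C (c * a)) := by
      rw [Polynomial.sub_comp, Polynomial.X_comp, Polynomial.C_comp, mul_sub, ← C_mul,
        inv_mul_cancel_left₀ hc]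
    refine ⟨C c⁻¹ ^ n * e.comp (C c⁻¹ * X), ?_⟩
    rw [h3, hXa, mul_pow]; ring
  · generalize hm : f.rootMultiplicity (c * a) = m
    rw [Polynomial.le_rootMultiplicity_iff hg]
    obtain ⟨e, he⟩ := Polynomial.pow_rootMultiplicity_dvd f (c * a)
    rw [hm] at he
    have h3 : f.comp (C c * X) = ((X - C (c * a)).comp (C c * X)) ^ m * e.comp (C c * X) := by
      rw [← Polynomial.pow_comp, ← Polynomial.mul_comp, ← he]
    have hXa : (X - C (c * a)).comp (C c * X) = C c * (X - C a) := by
      rw [Polynomial.sub_comp, Polynomial.X_comp, Polynomial.C_comp, mul_sub, ← C_mul]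
    refine ⟨C c ^ m * e.comp (C c * X), ?_⟩
    rw [h3, hXa, mul_pow]; ring

lemma roots_comp_linear {f : Polynomial L} (hf : f ≠ 0) {c : L} (hc : c ≠ 0) :
    (f.comp (C c * X)).roots = f.roots.map (fun r => c⁻¹ * r) := by
  classical
  have hg : f.comp (C c * X) ≠ 0 := comp_linear_ne_zero hf hc
  have hinj : Function.Injective (fun r : L => c⁻¹ * r) :=
    fun x y h => by simpa using mul_left_cancel₀ (inv_ne_zero hc) h
  ext z
  have hz : (fun r : L => c⁻¹ * r) (c * z) = z := by
    simp [← mul_assoc, inv_mul_cancel₀ hc]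
  calc (f.comp (C c * X)).roots.count z = (f.comp (C c * X)).rootMultiplicity z := by
        rw [Polynomial.count_roots]
    _ = f.rootMultiplicity (c * z) := rootMultiplicity_comp_linear hf hc z
    _ = f.roots.count (c * z) := by rw [Polynomial.count_roots]
    _ = (f.roots.map (fun r => c⁻¹ * r)).count z := by
        conv_rhs => rw [← hz]
        rw [Multiset.count_map_eq_count' _ _ hinj]

lemma cover_card {α β : Type*} (R : Multiset α) (C : Finset β) (p : β → α → Prop)
    [∀ c a, Decidable (p c a)]
    (h : ∀ r ∈ R, ∃ c ∈ C, p c r) :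
    Multiset.card R ≤ ∑ c ∈ C, Multiset.card (R.filter (p c)) := by
  classical
  induction R using Multiset.induction with
  | empty => simp
  | cons a R ih =>
    obtain ⟨c, hcC, hpc⟩ := h a (Multiset.mem_cons_self a R)
    have hR : ∀ r ∈ R, ∃ c ∈ C, p c r := fun r hr => h r (Multiset.mem_cons_of_mem hr)
    rw [Multiset.card_cons]
    have hsum : ∑ c' ∈ C, Multiset.card ((a ::ₘ R).filter (p c'))
        = ∑ c' ∈ C, ((if p c' a then 1 else 0) + Multiset.card (R.filter (p c'))) := by
      refine Finset.sum_congr rfl (fun c' _ => ?_)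
      rw [Multiset.filter_cons, Multiset.card_add]
      congr 1
      split <;> simp
    rw [hsum, Finset.sum_add_distrib]
    have h1 : 1 ≤ ∑ c' ∈ C, (if p c' a then 1 else 0) := by
      refine le_trans ?_ (Finset.single_le_sum (f := fun c' => if p c' a then (1:ℕ) else 0)
        (fun _ _ => Nat.zero_le _) hcC)
      simp [hpc]
    have h2 := ih hR
    omega

end CompLemmas

section Residue
variable {L : Type*} [Field L] (v : L → WithTop ℝ)
  (hv0 : ∀ x, v x = ⊤ ↔ x = 0)
  (hvmul : ∀ x y, v (x * y) = v x + v y)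
  (hvadd : ∀ x y, min (v x) (v y) ≤ v (x + y))

noncomputable def aElem (x : L) : valRing L v hv0 hvmul hvadd :=
  if h : 0 ≤ v x then ⟨x, h⟩ else 0

lemma aElem_coe {x : L} (h : 0 ≤ v x) :
    ((aElem v hv0 hvmul hvadd x : valRing L v hv0 hvmul hvadd) : L) = x := by
  rw [aElem, dif_pos h]

lemma mem_valIdeal_iff {x : valRing L v hv0 hvmul hvadd} :
    x ∈ valIdeal L v hv0 hvmul hvadd ↔ 0 < v (x : L) := Iff.rfl

include hv0 hvmul hvadd

lemma one_ne_zero_K :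
    (1 : (valRing L v hv0 hvmul hvadd) ⧸ (valIdeal L v hv0 hvmul hvadd)) ≠ 0 := by
  intro h
  rw [show (1 : (valRing L v hv0 hvmul hvadd) ⧸ (valIdeal L v hv0 hvmul hvadd))
      = Ideal.Quotient.mk _ 1 from rfl, Ideal.Quotient.eq_zero_iff_mem,
    mem_valIdeal_iff] at h
  rw [OneMemClass.coe_one, v_one' v hv0 hvmul hvadd] at h
  exact lt_irrefl _ h

lemma residue_bound {t b : ℕ}
    (hK : ∀ g : Polynomial
        ((valRing L v hv0 hvmul hvadd) ⧸ (valIdeal L v hv0 hvmul hvadd)),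
      g ≠ 0 → g.support.card ≤ t + 1 →
      ∀ S : Finset ((valRing L v hv0 hvmul hvadd) ⧸ (valIdeal L v hv0 hvmul hvadd)),
        (∀ r ∈ S, r ≠ 0 ∧ Polynomial.eval r g = 0) → S.card ≤ b)
    {f : Polynomial L} (hf : f ≠ 0) (hsupp : f.support.card ≤ t + 1)
    {r₀ : L} (hr₀ : r₀ ≠ 0) :
    ((f.roots.toFinset.filter (fun r => r ≠ 0 ∧ valR v r = valR v r₀)).image
      (fun r => Ideal.Quotient.mk (valIdeal L v hv0 hvmul hvadd)
        (aElem v hv0 hvmul hvadd (r * r₀⁻¹)))).card ≤ b := by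
  classical
  set A := valRing L v hv0 hvmul hvadd with hA_def
  set M := valIdeal L v hv0 hvmul hvadd with hM_def
  have hs : f.support.Nonempty := Polynomial.support_nonempty.mpr hf
  obtain ⟨i₀, hi₀, hmin⟩ := Finset.exists_min_image f.support
    (fun i => valR v (f.coeff i * r₀ ^ i)) hs
  set u := f.coeff i₀ * r₀ ^ i₀ with hu_def
  have hterm0 : ∀ i ∈ f.support, f.coeff i * r₀ ^ i ≠ 0 := fun i hi =>
    mul_ne_zero (Polynomial.mem_support_iff.mp hi) (pow_ne_zero _ hr₀)
  have hu0 : u ≠ 0 := hterm0 i₀ hi₀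
  have hcoefA : ∀ i ∈ f.support, 0 ≤ v (u⁻¹ * (f.coeff i * r₀ ^ i)) := by
    intro i hi
    rw [v_eq_valR v hv0 hvmul hvadd (mul_ne_zero (inv_ne_zero hu0) (hterm0 i hi))]
    have heq : valR v (u⁻¹ * (f.coeff i * r₀ ^ i))
        = valR v (f.coeff i * r₀ ^ i) - valR v u := by
      rw [valR_mul v hv0 hvmul hvadd (inv_ne_zero hu0) (hterm0 i hi),
        valR_inv v hv0 hvmul hvadd hu0]; ring
    rw [heq]
    exact_mod_cast sub_nonneg.mpr (hmin i hi)
  set H : Polynomial A := ∑ i ∈ f.support,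
    Polynomial.C (aElem v hv0 hvmul hvadd (u⁻¹ * (f.coeff i * r₀ ^ i)))
      * Polynomial.X ^ i with hH_def
  have hHcoeff : ∀ j, H.coeff j = if j ∈ f.support then
      aElem v hv0 hvmul hvadd (u⁻¹ * (f.coeff j * r₀ ^ j)) else 0 := by
    intro j
    rw [hH_def, Polynomial.finset_sum_coeff]
    have h1 : ∀ i ∈ f.support,
        (Polynomial.C (aElem v hv0 hvmul hvadd (u⁻¹ * (f.coeff i * r₀ ^ i)))
          * Polynomial.X ^ i).coeff j
        = if j = i then aElem v hv0 hvmul hvadd (u⁻¹ * (f.coeff i * r₀ ^ i)) else 0 := by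
      intro i _
      rw [Polynomial.coeff_C_mul, Polynomial.coeff_X_pow]
      simp [mul_ite]
    rw [Finset.sum_congr rfl h1, Finset.sum_ite_eq f.support j _]
  have hHsupp : H.support ⊆ f.support := by
    intro j hj
    by_contra hjs
    rw [Polynomial.mem_support_iff, hHcoeff j, if_neg hjs] at hj
    exact hj rfl
  set Hbar := H.map (Ideal.Quotient.mk M) with hHbar_def
  have hHbarsupp : Hbar.support ⊆ f.support :=
    subset_trans (Polynomial.support_map_subset _ _) hHsupp
  have haone : aElem v hv0 hvmul hvadd (1 : L) = 1 := by
    apply Subtype.ext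
    rw [aElem_coe v hv0 hvmul hvadd (by rw [v_one' v hv0 hvmul hvadd]), OneMemClass.coe_one]
  have hHbar_i₀ : Hbar.coeff i₀ = 1 := by
    rw [hHbar_def, Polynomial.coeff_map, hHcoeff i₀, if_pos hi₀, ← hu_def,
      inv_mul_cancel₀ hu0, haone, map_one]
  have hHbar0 : Hbar ≠ 0 := by
    intro h
    apply one_ne_zero_K v hv0 hvmul hvadd
    rw [← hHbar_i₀, h, Polynomial.coeff_zero]
  apply hK Hbar hHbar0 (le_trans (Finset.card_le_card hHbarsupp) hsupp)
  intro k hk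
  obtain ⟨r, hrmem, hrk⟩ := Finset.mem_image.mp hk
  rw [Finset.mem_filter] at hrmem
  obtain ⟨hr1, hr2, hr3⟩ := hrmem
  set z := r * r₀⁻¹ with hz_def
  have hz0 : z ≠ 0 := mul_ne_zero hr2 (inv_ne_zero hr₀)
  have hvz : v z = 0 := by
    rw [v_eq_valR v hv0 hvmul hvadd hz0,
      valR_mul v hv0 hvmul hvadd hr2 (inv_ne_zero hr₀),
      valR_inv v hv0 hvmul hvadd hr₀, hr3]
    simp
  have hzA : 0 ≤ v z := le_of_eq hvz.symm
  have hcoe : ((aElem v hv0 hvmul hvadd z : A) : L) = z :=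
    aElem_coe v hv0 hvmul hvadd hzA
  rw [← hrk]
  constructor
  · intro h
    rw [Ideal.Quotient.eq_zero_iff_mem, mem_valIdeal_iff, hcoe, hvz] at h
    exact lt_irrefl _ h
  · have hHeval : Polynomial.eval (aElem v hv0 hvmul hvadd z) H = 0 := by
      have hinj : Function.Injective (A.subtype) := fun a b h => Subtype.ext h
      apply hinj
      rw [map_zero]
      have h1 : A.subtype (Polynomial.eval (aElem v hv0 hvmul hvadd z) H)
          = Polynomial.eval (A.subtype (aElem v hv0 hvmul hvadd z)) (H.map A.subtype) := by
        rw [Polynomial.eval_map, Polynomial.eval₂_at_apply]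
      rw [h1]
      have h2 : A.subtype (aElem v hv0 hvmul hvadd z) = z := hcoe
      rw [h2, hH_def, Polynomial.map_sum]
      have h3 : ∀ i ∈ f.support,
          ((Polynomial.C (aElem v hv0 hvmul hvadd (u⁻¹ * (f.coeff i * r₀ ^ i)))
            * Polynomial.X ^ i).map A.subtype)
          = Polynomial.C (u⁻¹ * (f.coeff i * r₀ ^ i)) * Polynomial.X ^ i := by
        intro i hi
        rw [Polynomial.map_mul, Polynomial.map_C, Polynomial.map_pow, Polynomial.map_X]
        congr 2
        exact aElem_coe v hv0 hvmul hvadd (hcoefA i hi)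
      rw [Finset.sum_congr rfl h3, Polynomial.eval_finset_sum]
      have h4 : ∀ i ∈ f.support,
          Polynomial.eval z (Polynomial.C (u⁻¹ * (f.coeff i * r₀ ^ i)) * Polynomial.X ^ i)
          = u⁻¹ * (f.coeff i * r ^ i) := by
        intro i hi
        rw [Polynomial.eval_mul, Polynomial.eval_C, Polynomial.eval_pow, Polynomial.eval_X]
        have hpow : r₀ ^ i * z ^ i = r ^ i := by
          rw [← mul_pow, hz_def]
          congr 1
          field_simp
        calc u⁻¹ * (f.coeff i * r₀ ^ i) * z ^ i
            = u⁻¹ * (f.coeff i * (r₀ ^ i * z ^ i)) := by ring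
          _ = u⁻¹ * (f.coeff i * r ^ i) := by rw [hpow]
      rw [Finset.sum_congr rfl h4, ← Finset.mul_sum]
      have h5 : ∑ i ∈ f.support, f.coeff i * r ^ i = Polynomial.eval r f := by
        rw [Polynomial.eval_eq_sum, Polynomial.sum_def]
      rw [h5, (Polynomial.mem_roots hf).mp (Multiset.mem_toFinset.mp hr1), mul_zero]
    rw [hHbar_def, Polynomial.eval_map, Polynomial.eval₂_at_apply, hHeval, map_zero]

end Residue

section Assembly
variable {L : Type*} [Field L] (v : L → WithTop ℝ)
  (hv0 : ∀ x, v x = ⊤ ↔ x = 0)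
  (hvmul : ∀ x y, v (x * y) = v x + v y)
  (hvadd : ∀ x y, min (v x) (v y) ≤ v (x + y))

include hv0 hvmul hvadd

lemma exists_reps {t b : ℕ}
    (hK : ∀ g : Polynomial
        ((valRing L v hv0 hvmul hvadd) ⧸ (valIdeal L v hv0 hvmul hvadd)),
      g ≠ 0 → g.support.card ≤ t + 1 →
      ∀ S : Finset ((valRing L v hv0 hvmul hvadd) ⧸ (valIdeal L v hv0 hvmul hvadd)),
        (∀ r ∈ S, r ≠ 0 ∧ Polynomial.eval r g = 0) → S.card ≤ b)
    {f : Polynomial L} (hf : f ≠ 0) (hsupp : f.support.card ≤ t + 1) :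
    ∃ C : Finset L, C.card ≤ t * b ∧ (∀ c ∈ C, c ≠ 0) ∧
      ∀ r ∈ f.roots, r ≠ 0 → ∃ c ∈ C, 0 < v (r * c⁻¹ - 1) := by
  classical
  set D := f.roots.toFinset.filter (fun r => r ≠ 0) with hD_def
  have hDprop : ∀ r ∈ D, r ∈ f.roots ∧ r ≠ 0 := by
    intro r hr
    rw [hD_def, Finset.mem_filter, Multiset.mem_toFinset] at hr
    exact hr
  set Γ := D.image (valR v) with hΓ_def
  have hΓcard : Γ.card ≤ t := by
    have h1 := newton_bound v hv0 hvmul hvadd f hf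
    rw [← hD_def, ← hΓ_def] at h1
    omega
  set Dγ : ℝ → Finset L := fun γ => D.filter (fun r => valR v r = γ) with hDγ_def
  set r₀ : ℝ → L := fun γ => if h : (Dγ γ).Nonempty then h.choose else 1 with hr₀_def
  have hr₀mem : ∀ γ ∈ Γ, r₀ γ ∈ Dγ γ := by
    intro γ hγ
    obtain ⟨r, hr, hrγ⟩ := Finset.mem_image.mp hγ
    have hne : (Dγ γ).Nonempty := ⟨r, Finset.mem_filter.mpr ⟨hr, hrγ⟩⟩
    rw [hr₀_def]; simp only [dif_pos hne]; exact hne.choose_spec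
  set ρ : ℝ → L → ((valRing L v hv0 hvmul hvadd) ⧸ (valIdeal L v hv0 hvmul hvadd)) :=
    fun γ x => Ideal.Quotient.mk (valIdeal L v hv0 hvmul hvadd)
      (aElem v hv0 hvmul hvadd (x * (r₀ γ)⁻¹)) with hρ_def
  set rep : ℝ → ((valRing L v hv0 hvmul hvadd) ⧸ (valIdeal L v hv0 hvmul hvadd)) → L :=
    fun γ k => if h : ((Dγ γ).filter (fun r => ρ γ r = k)).Nonempty then h.choose else 1
    with hrep_def
  have hrep : ∀ γ, ∀ r ∈ Dγ γ, rep γ (ρ γ r) ∈ Dγ γ ∧ ρ γ (rep γ (ρ γ r)) = ρ γ r := by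
    intro γ r hr
    have hne : ((Dγ γ).filter (fun s => ρ γ s = ρ γ r)).Nonempty :=
      ⟨r, Finset.mem_filter.mpr ⟨hr, rfl⟩⟩
    rw [hrep_def]; simp only [dif_pos hne]
    have h2 := hne.choose_spec
    rw [Finset.mem_filter] at h2
    exact h2
  refine ⟨Γ.biUnion (fun γ => (Dγ γ).image (fun r => rep γ (ρ γ r))), ?_, ?_, ?_⟩
  · -- card bound
    refine le_trans Finset.card_biUnion_le ?_
    have hb : ∀ γ ∈ Γ, ((Dγ γ).image (fun r => rep γ (ρ γ r))).card ≤ b := by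
      intro γ hγ
      have h1 := hr₀mem γ hγ
      rw [Finset.mem_filter] at h1
      obtain ⟨h2, h3⟩ := hDprop _ h1.1
      have hbase := residue_bound v hv0 hvmul hvadd hK hf hsupp h3
      have hEq : Dγ γ = f.roots.toFinset.filter
          (fun r => r ≠ 0 ∧ valR v r = valR v (r₀ γ)) := by
        ext x
        simp only [hDγ_def, hD_def, Finset.mem_filter, Multiset.mem_toFinset, h1.2]
        tauto
      calc ((Dγ γ).image (fun r => rep γ (ρ γ r))).card
          = (((Dγ γ).image (ρ γ)).image (rep γ)).card := by
            rw [Finset.image_image]; rfl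
        _ ≤ ((Dγ γ).image (ρ γ)).card := Finset.card_image_le
        _ ≤ b := by rw [hEq]; exact hbase
    calc ∑ γ ∈ Γ, ((Dγ γ).image (fun r => rep γ (ρ γ r))).card ≤ ∑ _γ ∈ Γ, b :=
          Finset.sum_le_sum hb
      _ = Γ.card * b := by rw [Finset.sum_const, smul_eq_mul]
      _ ≤ t * b := Nat.mul_le_mul_right b hΓcard
  · -- nonzero
    intro c hc
    rw [Finset.mem_biUnion] at hc
    obtain ⟨γ, hγ, hc2⟩ := hc
    obtain ⟨r, hr, hrc⟩ := Finset.mem_image.mp hc2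
    have h1 := (hrep γ r hr).1
    rw [hrc] at h1
    rw [Finset.mem_filter] at h1
    exact (hDprop _ h1.1).2
  · -- coverage
    intro r hroot hr0
    have hrD : r ∈ D := by
      rw [hD_def, Finset.mem_filter, Multiset.mem_toFinset]
      exact ⟨hroot, hr0⟩
    set γ := valR v r with hγr
    have hγΓ : γ ∈ Γ := Finset.mem_image_of_mem _ hrD
    have hrDγ : r ∈ Dγ γ := Finset.mem_filter.mpr ⟨hrD, rfl⟩
    set c := rep γ (ρ γ r) with hc_def
    obtain ⟨hcDγ, hcρ⟩ := hrep γ r hrDγ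
    refine ⟨c, Finset.mem_biUnion.mpr ⟨γ, hγΓ, Finset.mem_image_of_mem _ hrDγ⟩, ?_⟩
    -- unpack info about c and r₀ γ
    rw [Finset.mem_filter] at hcDγ
    obtain ⟨hcD, hcval⟩ := hcDγ
    have hc0 : c ≠ 0 := (hDprop _ hcD).2
    have h1 := hr₀mem γ hγΓ
    rw [Finset.mem_filter] at h1
    have hr₀0 : (r₀ γ) ≠ 0 := (hDprop _ h1.1).2
    have hr₀val : valR v (r₀ γ) = γ := h1.2
    -- v of (x * r₀⁻¹) is ≥ 0 for x ∈ {r, c}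
    have hvz : ∀ x : L, x ≠ 0 → valR v x = γ → v (x * (r₀ γ)⁻¹) = 0 := by
      intro x hx hxval
      rw [v_eq_valR v hv0 hvmul hvadd (mul_ne_zero hx (inv_ne_zero hr₀0)),
        valR_mul v hv0 hvmul hvadd hx (inv_ne_zero hr₀0),
        valR_inv v hv0 hvmul hvadd hr₀0, hxval, hr₀val]
      simp
    have hvzr : 0 ≤ v (r * (r₀ γ)⁻¹) := le_of_eq (hvz r hr0 rfl).symm
    have hvzc : 0 ≤ v (c * (r₀ γ)⁻¹) := le_of_eq (hvz c hc0 hcval).symm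
    -- from residue equality to ideal membership
    have hdiff : 0 < v (c * (r₀ γ)⁻¹ - r * (r₀ γ)⁻¹) := by
      have h2 : Ideal.Quotient.mk (valIdeal L v hv0 hvmul hvadd)
          (aElem v hv0 hvmul hvadd (c * (r₀ γ)⁻¹))
          = Ideal.Quotient.mk (valIdeal L v hv0 hvmul hvadd)
            (aElem v hv0 hvmul hvadd (r * (r₀ γ)⁻¹)) := hcρ
      rw [Ideal.Quotient.eq] at h2
      have h3 := (mem_valIdeal_iff v hv0 hvmul hvadd).mp h2
      have h4 : ((aElem v hv0 hvmul hvadd (c * (r₀ γ)⁻¹)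
          - aElem v hv0 hvmul hvadd (r * (r₀ γ)⁻¹) :
            valRing L v hv0 hvmul hvadd) : L)
          = c * (r₀ γ)⁻¹ - r * (r₀ γ)⁻¹ := by
        push_cast
        rw [aElem_coe v hv0 hvmul hvadd hvzc, aElem_coe v hv0 hvmul hvadd hvzr]
      rw [h4] at h3
      exact h3
    -- multiply by the unit r₀ * c⁻¹
    have hunit : v ((r₀ γ) * c⁻¹) = 0 := by
      rw [v_eq_valR v hv0 hvmul hvadd (mul_ne_zero hr₀0 (inv_ne_zero hc0)),
        valR_mul v hv0 hvmul hvadd hr₀0 (inv_ne_zero hc0),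
        valR_inv v hv0 hvmul hvadd hc0, hr₀val, hcval]
      simp
    have hfact : r * c⁻¹ - 1 = (c * (r₀ γ)⁻¹ - r * (r₀ γ)⁻¹) * (-((r₀ γ) * c⁻¹)) := by
      field_simp
      ring
    rw [hfact, hvmul, v_neg' v hv0 hvmul hvadd, hunit, add_zero]
    exact hdiff

end Assembly

/-- Let `L` be a field with additive non-archimedean valuation
`v`, valuation ring `A`, maximal ideal `M` and residue field `K = A/M`, and let
`t ≥ 1`.  Suppose every nonzero polynomial over `K` with at most `t+1` terms has
at most `b` distinct nonzero roots.  If every nonzero polynomial over `L` with at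
most `t+1` terms has at most `d` roots in `1+M` (with multiplicities, resp.
distinct), then every nonzero polynomial over `L` with at most `t+1` terms has at
most `t·b·d` nonzero roots in `L` (with multiplicities, resp. distinct). -/
theorem roots_bound_of_residue_bound (L : Type*) [Field L] (v : L → WithTop ℝ)
    (hv0 : ∀ x, v x = ⊤ ↔ x = 0)
    (hvmul : ∀ x y, v (x * y) = v x + v y)
    (hvadd : ∀ x y, min (v x) (v y) ≤ v (x + y))
    (t b d : ℕ) (ht : 1 ≤ t)
    (hK : ∀ g : Polynomial
        ((valRing L v hv0 hvmul hvadd) ⧸ (valIdeal L v hv0 hvmul hvadd)),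
      g ≠ 0 → g.support.card ≤ t + 1 →
      ∀ S : Finset ((valRing L v hv0 hvmul hvadd) ⧸ (valIdeal L v hv0 hvmul hvadd)),
        (∀ r ∈ S, r ≠ 0 ∧ Polynomial.eval r g = 0) → S.card ≤ b) :
    ((∀ f : Polynomial L, f ≠ 0 → f.support.card ≤ t + 1 →
        (f.roots.filter (fun r => 0 < v (r - 1))).card ≤ d) →
      ∀ f : Polynomial L, f ≠ 0 → f.support.card ≤ t + 1 →
        (f.roots.filter (fun r => r ≠ 0)).card ≤ t * b * d) ∧
    ((∀ f : Polynomial L, f ≠ 0 → f.support.card ≤ t + 1 →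
        (f.roots.toFinset.filter (fun r => 0 < v (r - 1))).card ≤ d) →
      ∀ f : Polynomial L, f ≠ 0 → f.support.card ≤ t + 1 →
        (f.roots.toFinset.filter (fun r => r ≠ 0)).card ≤ t * b * d) := by
  constructor
  · -- with multiplicities
    intro hd f hf hsupp
    obtain ⟨Cs, hC1, hC2, hC3⟩ := exists_reps v hv0 hvmul hvadd hK hf hsupp
    have hcover : ∀ r ∈ f.roots.filter (fun r => r ≠ 0), ∃ c ∈ Cs, 0 < v (r * c⁻¹ - 1) := by
      intro r hr
      rw [Multiset.mem_filter] at hr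
      exact hC3 r hr.1 hr.2
    have hclass : ∀ c ∈ Cs, Multiset.card ((f.roots.filter (fun r => r ≠ 0)).filter
        (fun r => 0 < v (r * c⁻¹ - 1))) ≤ d := by
      intro c hc
      have hc0 := hC2 c hc
      have step1 : Multiset.card ((f.roots.filter (fun r => r ≠ 0)).filter
          (fun r => 0 < v (r * c⁻¹ - 1)))
          ≤ Multiset.card (f.roots.filter (fun r => 0 < v (r * c⁻¹ - 1))) :=
        Multiset.card_le_card (Multiset.filter_le_filter _ (Multiset.filter_le _ _))
      have step2 : Multiset.card (f.roots.filter (fun r => 0 < v (r * c⁻¹ - 1)))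
          = Multiset.card ((f.comp (Polynomial.C c * Polynomial.X)).roots.filter
            (fun z => 0 < v (z - 1))) := by
        rw [roots_comp_linear hf hc0, Multiset.filter_map, Multiset.card_map]
        congr 1
        apply Multiset.filter_congr
        intro r _
        rw [mul_comm]
        rfl
      have hgne := comp_linear_ne_zero hf hc0
      have hgsupp : (f.comp (Polynomial.C c * Polynomial.X)).support.card ≤ t + 1 := by
        rw [comp_linear_support f hc0]; exact hsupp
      exact step1.trans (step2.trans_le (hd _ hgne hgsupp))
    calc Multiset.card (f.roots.filter (fun r => r ≠ 0))
        ≤ ∑ c ∈ Cs, Multiset.card ((f.roots.filter (fun r => r ≠ 0)).filter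
            (fun r => 0 < v (r * c⁻¹ - 1))) :=
          cover_card _ Cs (fun c r => 0 < v (r * c⁻¹ - 1)) hcover
      _ ≤ ∑ _c ∈ Cs, d := Finset.sum_le_sum hclass
      _ = Cs.card * d := by rw [Finset.sum_const, smul_eq_mul]
      _ ≤ t * b * d := Nat.mul_le_mul_right d hC1
  · -- distinct roots
    intro hd f hf hsupp
    obtain ⟨Cs, hC1, hC2, hC3⟩ := exists_reps v hv0 hvmul hvadd hK hf hsupp
    set F := f.roots.toFinset.filter (fun r => r ≠ 0) with hF_def
    have hcover : ∀ r ∈ F.val, ∃ c ∈ Cs, 0 < v (r * c⁻¹ - 1) := by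
      intro r hr
      have h1 : r ∈ F := hr
      rw [hF_def, Finset.mem_filter, Multiset.mem_toFinset] at h1
      exact hC3 r h1.1 h1.2
    have hclass : ∀ c ∈ Cs,
        Multiset.card (F.val.filter (fun r => 0 < v (r * c⁻¹ - 1))) ≤ d := by
      intro c hc
      have hc0 := hC2 c hc
      have h1 : Multiset.card (F.val.filter (fun r => 0 < v (r * c⁻¹ - 1)))
          = (F.filter (fun r => 0 < v (r * c⁻¹ - 1))).card := rfl
      have h2 : (F.filter (fun r => 0 < v (r * c⁻¹ - 1))).card
          ≤ (f.roots.toFinset.filter (fun r => 0 < v (r * c⁻¹ - 1))).card :=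
        Finset.card_le_card (Finset.filter_subset_filter _ (Finset.filter_subset _ _))
      have hgne := comp_linear_ne_zero hf hc0
      have hgsupp : (f.comp (Polynomial.C c * Polynomial.X)).support.card ≤ t + 1 := by
        rw [comp_linear_support f hc0]; exact hsupp
      have h3 : (f.roots.toFinset.filter (fun r => 0 < v (r * c⁻¹ - 1))).card
          ≤ ((f.comp (Polynomial.C c * Polynomial.X)).roots.toFinset.filter
            (fun z => 0 < v (z - 1))).card := by
        apply Finset.card_le_card_of_injOn (fun r => c⁻¹ * r)
        · intro r hr
          rw [Finset.mem_coe, Finset.mem_filter, Multiset.mem_toFinset] at hr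
          obtain ⟨hr1, hr2⟩ := hr
          rw [Finset.mem_coe, Finset.mem_filter, Multiset.mem_toFinset]
          constructor
          · rw [Polynomial.mem_roots hgne]
            rw [Polynomial.IsRoot, Polynomial.eval_comp]
            simp only [Polynomial.eval_mul, Polynomial.eval_C, Polynomial.eval_X]
            have hcc : c * (c⁻¹ * r) = r := by field_simp
            rw [hcc]
            exact (Polynomial.mem_roots hf).mp hr1
          · have : c⁻¹ * r - 1 = r * c⁻¹ - 1 := by ring
            rw [this]
            exact hr2
        · intro x _ y _ hxy
          exact mul_left_cancel₀ (inv_ne_zero hc0) hxy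
      exact h1.trans_le (h2.trans (h3.trans (hd _ hgne hgsupp)))
    calc F.card
        ≤ ∑ c ∈ Cs, Multiset.card (F.val.filter (fun r => 0 < v (r * c⁻¹ - 1))) :=
          cover_card F.val Cs (fun c r => 0 < v (r * c⁻¹ - 1)) hcover
      _ ≤ ∑ _c ∈ Cs, d := Finset.sum_le_sum hclass
      _ = Cs.card * d := by rw [Finset.sum_const, smul_eq_mul]
      _ ≤ t * b * d := Nat.mul_le_mul_right d hC1
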